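/- Let B be the ball algebra on the closed unit ball of ℂ^d. For f ∈ B and n ∈ ℕ, define the n-th homogeneous component f_n : closed ball → ℂ by f_n(z) = (1/(2π)) ∫₀^{2π} f(e^{iθ} z) e^{−inθ} dθ. Then a closed ideal J ⊆ B satisfies (f_n ∈ J for all f ∈ J and all n ∈ ℕ) if and only if (for every f ∈ J and every t in the open unit disc 𝔻 ⊆ ℂ, the function z ↦ f(t z) belongs to J). -/

import Mathlib

open MvPolynomial Metric

noncomputable section

abbrev Cd (d : ℕ) := EuclideanSpace ℂ (Fin d)

abbrev CBall (d : ℕ) : Set (Cd d) := Metric.closedBall (0 : Cd d) 1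

instance (d : ℕ) : CompactSpace (CBall d) :=
  isCompact_iff_compactSpace.mp (isCompact_closedBall _ _)

/-- The `i`-th coordinate function on the closed unit ball. -/
def coordFn (d : ℕ) (i : Fin d) : C(CBall d, ℂ) :=
  ⟨fun z => (z : Cd d) i, by exact (continuous_apply i).comp ((PiLp.continuous_ofLp _ _).comp continuous_subtype_val)⟩

/-- Restriction of a polynomial to the closed unit ball, as an element of
`C(closedBall, ℂ)`. -/
def polyMap (d : ℕ) : MvPolynomial (Fin d) ℂ →ₐ[ℂ] C(CBall d, ℂ) :=
  aeval (coordFn d)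

/-- The ball algebra: the closure, in the Banach algebra of continuous functions on
the closed unit ball of ℂ^d with the supremum norm, of the restrictions of
polynomials. -/
def ballAlg (d : ℕ) : Set C(CBall d, ℂ) := closure (Set.range (polyMap d))

/-- `J` is an ideal of the ball algebra `B`. -/
def IsIdealOfBallAlg (d : ℕ) (J : Set C(CBall d, ℂ)) : Prop :=
  J ⊆ ballAlg d ∧ (0 : C(CBall d, ℂ)) ∈ J ∧
    (∀ f ∈ J, ∀ g ∈ J, f + g ∈ J) ∧ (∀ f ∈ J, ∀ g ∈ ballAlg d, g * f ∈ J)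

/-- The self-map of the closed ball given by `z ↦ t z` for `‖t‖ ≤ 1`. -/
def dilatePt (d : ℕ) (t : ℂ) (ht : ‖t‖ ≤ 1) : C(CBall d, CBall d) :=
  ⟨fun z => ⟨t • (z : Cd d), by
      have hz : ‖(z : Cd d)‖ ≤ 1 := mem_closedBall_zero_iff.mp z.2
      show t • (z : Cd d) ∈ Metric.closedBall 0 1
      rw [mem_closedBall_zero_iff, norm_smul]
      exact mul_le_one₀ ht (norm_nonneg _) hz⟩,
    by exact Continuous.subtype_mk (continuous_subtype_val.const_smul t) _⟩

/-- The dilation `f ↦ (z ↦ f (t z))` on continuous functions on the closed ball. -/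
def dilateFn (d : ℕ) (t : ℂ) (ht : ‖t‖ ≤ 1) (f : C(CBall d, ℂ)) : C(CBall d, ℂ) :=
  f.comp (dilatePt d t ht)

/-- A closed ideal of the ball algebra is homogeneous if it is invariant under all
dilations `z ↦ t z`, `|t| < 1`. -/
def IsHomogBallIdeal (d : ℕ) (J : Set C(CBall d, ℂ)) : Prop :=
  ∀ f ∈ J, ∀ t : ℂ, ∀ ht : ‖t‖ < 1, dilateFn d t ht.le f ∈ J

/-- Rotation `z ↦ e^{iθ} z` on the closed ball. -/
def rotPt (d : ℕ) (θ : ℝ) (z : CBall d) : CBall d :=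
  ⟨Complex.exp (θ * Complex.I) • (z : Cd d), by
    have hz : ‖(z : Cd d)‖ ≤ 1 := mem_closedBall_zero_iff.mp z.2
    show Complex.exp (θ * Complex.I) • (z : Cd d) ∈ Metric.closedBall 0 1
    rw [mem_closedBall_zero_iff, norm_smul]
    have h1 : ‖Complex.exp (θ * Complex.I)‖ = 1 := by
      simp [Complex.norm_exp_ofReal_mul_I θ]
    rw [h1, one_mul]
    exact hz⟩

/-- The `n`-th homogeneous component of `f` at `z`, given by the circle average
`f_n(z) = (1/(2π)) ∫₀^{2π} f(e^{iθ} z) e^{−inθ} dθ`. -/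
def circAvg (d : ℕ) (n : ℕ) (f : C(CBall d, ℂ)) (z : CBall d) : ℂ :=
  (2 * Real.pi)⁻¹ •
    ∫ θ in (0 : ℝ)..(2 * Real.pi), f (rotPt d θ z) * Complex.exp (-(n : ℂ) * θ * Complex.I)

----------------------------------------------------------------
-- helper lemmas
----------------------------------------------------------------

lemma norm_exp_neg_n (n : ℕ) (θ : ℝ) : ‖Complex.exp (-(n : ℂ) * θ * Complex.I)‖ = 1 := by
  have : (-(n : ℂ) * θ) = ((-(n * θ) : ℝ) : ℂ) := by push_cast; ring
  rw [this]
  exact Complex.norm_exp_ofReal_mul_I _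

lemma continuous_rot {d : ℕ} (z : CBall d) : Continuous fun θ : ℝ => rotPt d θ z := by
  apply Continuous.subtype_mk
  exact (Complex.continuous_exp.comp (Complex.continuous_ofReal.mul continuous_const)).smul continuous_const

lemma integrand_continuous {d : ℕ} (f : C(CBall d, ℂ)) (n : ℕ) (z : CBall d) :
    Continuous fun θ : ℝ => f (rotPt d θ z) * Complex.exp (-(n : ℂ) * θ * Complex.I) := by
  apply Continuous.mul (f.continuous.comp (continuous_rot z))
  exact Complex.continuous_exp.comp (by continuity)

lemma circAvg_norm_le {d : ℕ} (n : ℕ) (f : C(CBall d, ℂ)) (z : CBall d) :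
    ‖circAvg d n f z‖ ≤ ‖f‖ := by
  have hπ : (0:ℝ) < 2 * Real.pi := by positivity
  have hb : ‖∫ θ in (0:ℝ)..(2*Real.pi),
      f (rotPt d θ z) * Complex.exp (-(n : ℂ) * θ * Complex.I)‖ ≤ ‖f‖ * |2*Real.pi - 0| := by
    apply intervalIntegral.norm_integral_le_of_norm_le_const
    intro θ _
    rw [norm_mul, norm_exp_neg_n, mul_one]
    exact f.norm_coe_le_norm _
  rw [circAvg, norm_smul, norm_inv, Real.norm_eq_abs, abs_of_pos hπ]
  calc (2*Real.pi)⁻¹ * ‖_‖ ≤ (2*Real.pi)⁻¹ * (‖f‖ * |2*Real.pi - 0|) := by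
        exact mul_le_mul_of_nonneg_left hb (by positivity)
    _ = ‖f‖ := by rw [sub_zero, abs_of_pos hπ]; field_simp

lemma polyMap_apply {d : ℕ} (p : MvPolynomial (Fin d) ℂ) (w : CBall d) :
    polyMap d p w = MvPolynomial.eval (fun i => (w : Cd d) i) p := by
  induction p using MvPolynomial.induction_on with
  | C a => simp [polyMap, Algebra.algebraMap_eq_smul_one]
  | add p q hp hq => simp [map_add, hp, hq]
  | mul_X p i hp =>
    rw [map_mul, ContinuousMap.mul_apply, hp, map_mul, eval_X]
    congr 1
    show (aeval (coordFn d)) (X i) w = _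
    rw [aeval_X]
    rfl

lemma isHom_eval_mul {d : ℕ} {q : MvPolynomial (Fin d) ℂ} {n : ℕ}
    (hq : q.IsHomogeneous n) (t : ℂ) (x : Fin d → ℂ) :
    MvPolynomial.eval (fun i => t * x i) q = t ^ n * MvPolynomial.eval x q := by
  rw [eval_eq, eval_eq, Finset.mul_sum]
  apply Finset.sum_congr rfl
  intro dd hd
  have hdeg : dd.degree = n := by
    by_contra h
    exact (MvPolynomial.mem_support_iff.mp hd) (hq.coeff_eq_zero h)
  have : ∏ i ∈ dd.support, (t * x i) ^ dd i
      = t ^ n * ∏ i ∈ dd.support, x i ^ dd i := by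
    rw [← hdeg]
    simp_rw [mul_pow]
    rw [Finset.prod_mul_distrib, Finset.prod_pow_eq_pow_sum]
    rfl
  rw [this]; ring

lemma eval_mul_homog {d : ℕ} (p : MvPolynomial (Fin d) ℂ) (t : ℂ) (x : Fin d → ℂ) :
    MvPolynomial.eval (fun i => t * x i) p
      = ∑ m ∈ Finset.range (p.totalDegree + 1),
          t ^ m * MvPolynomial.eval x (homogeneousComponent m p) := by
  conv_lhs => rw [← MvPolynomial.sum_homogeneousComponent p]
  rw [map_sum]
  exact Finset.sum_congr rfl fun m _ =>
    isHom_eval_mul (homogeneousComponent_isHomogeneous m p) t x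

lemma integral_rot_exp (m n : ℕ) :
    (∫ θ in (0:ℝ)..(2*Real.pi),
      Complex.exp ((m : ℂ) * θ * Complex.I) * Complex.exp (-(n : ℂ) * θ * Complex.I))
      = if m = n then (2*Real.pi : ℂ) else 0 := by
  have hcomb : ∀ θ : ℝ, Complex.exp ((m : ℂ) * θ * Complex.I) *
      Complex.exp (-(n : ℂ) * θ * Complex.I)
      = Complex.exp ((((m : ℂ) - n) * Complex.I) * θ) := by
    intro θ; rw [← Complex.exp_add]; ring_nf
  simp_rw [hcomb]
  by_cases h : m = n
  · subst h
    simp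
  · have hmn : ((m : ℂ) - n) ≠ 0 := by
      intro hc
      exact h (by exact_mod_cast sub_eq_zero.mp hc)
    have hc : ((m : ℂ) - n) * Complex.I ≠ 0 := by
      simp [hmn, Complex.I_ne_zero]
    rw [integral_exp_mul_complex hc, if_neg h]
    have h1 : (((m : ℂ) - n) * Complex.I) * ((2 * Real.pi : ℝ) : ℂ)
        = ((m : ℤ) - (n : ℤ) : ℂ) * (2 * Real.pi * Complex.I) := by push_cast; ring
    have h2 : Complex.exp ((((m : ℂ) - n) * Complex.I) * ((2 * Real.pi : ℝ) : ℂ)) = 1 := by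
      rw [h1]
      exact_mod_cast Complex.exp_int_mul_two_pi_mul_I ((m : ℤ) - n)
    rw [h2]
    simp

lemma rotPt_coord {d : ℕ} (θ : ℝ) (z : CBall d) (i : Fin d) :
    ((rotPt d θ z : CBall d) : Cd d) i = Complex.exp ((θ : ℂ) * Complex.I) * (z : Cd d) i := rfl

lemma circAvg_poly {d : ℕ} (n : ℕ) (p : MvPolynomial (Fin d) ℂ) (z : CBall d) :
    circAvg d n (polyMap d p) z
      = MvPolynomial.eval (fun i => (z : Cd d) i) (homogeneousComponent n p) := by
  have key : ∀ θ : ℝ, (polyMap d p) (rotPt d θ z)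
      = ∑ m ∈ Finset.range (p.totalDegree + 1),
          Complex.exp ((m : ℂ) * θ * Complex.I)
            * MvPolynomial.eval (fun i => (z : Cd d) i) (homogeneousComponent m p) := by
    intro θ
    rw [polyMap_apply]
    have : (fun i => ((rotPt d θ z : CBall d) : Cd d) i)
        = fun i => Complex.exp ((θ : ℂ) * Complex.I) * (z : Cd d) i := by
      funext i; exact rotPt_coord θ z i
    rw [this, eval_mul_homog]
    apply Finset.sum_congr rfl
    intro m _
    rw [← Complex.exp_nat_mul]
    ring_nf
  set c : ℕ → ℂ := fun m => MvPolynomial.eval (fun i => (z : Cd d) i) (homogeneousComponent m p) with hc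
  have hint : ∀ m ∈ Finset.range (p.totalDegree + 1), IntervalIntegrable
      (fun θ : ℝ => Complex.exp ((m : ℂ) * θ * Complex.I) * c m
        * Complex.exp (-(n : ℂ) * θ * Complex.I)) MeasureTheory.volume 0 (2*Real.pi) := by
    intro m _
    apply Continuous.intervalIntegrable
    apply Continuous.mul
    apply Continuous.mul
    · exact Complex.continuous_exp.comp (by continuity)
    · exact continuous_const
    · exact Complex.continuous_exp.comp (by continuity)
  have hI : (∫ θ in (0:ℝ)..(2*Real.pi),
      (polyMap d p) (rotPt d θ z) * Complex.exp (-(n : ℂ) * θ * Complex.I))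
      = ∑ m ∈ Finset.range (p.totalDegree + 1),
          c m * (if m = n then (2*Real.pi : ℂ) else 0) := by
    calc (∫ θ in (0:ℝ)..(2*Real.pi),
        (polyMap d p) (rotPt d θ z) * Complex.exp (-(n : ℂ) * θ * Complex.I))
        = ∫ θ in (0:ℝ)..(2*Real.pi), ∑ m ∈ Finset.range (p.totalDegree + 1),
            Complex.exp ((m : ℂ) * θ * Complex.I) * c m
              * Complex.exp (-(n : ℂ) * θ * Complex.I) := by
          apply intervalIntegral.integral_congr
          intro θ _
          simp only [key θ, Finset.sum_mul]
          rfl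
      _ = ∑ m ∈ Finset.range (p.totalDegree + 1), ∫ θ in (0:ℝ)..(2*Real.pi),
            Complex.exp ((m : ℂ) * θ * Complex.I) * c m
              * Complex.exp (-(n : ℂ) * θ * Complex.I) :=
          intervalIntegral.integral_finset_sum hint
      _ = ∑ m ∈ Finset.range (p.totalDegree + 1),
            c m * (if m = n then (2*Real.pi : ℂ) else 0) := by
          apply Finset.sum_congr rfl
          intro m _
          rw [← integral_rot_exp m n, ← intervalIntegral.integral_const_mul]
          apply intervalIntegral.integral_congr
          intro θ _
          ring
  rw [circAvg, hI]
  have hsum : (∑ m ∈ Finset.range (p.totalDegree + 1),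
      c m * (if m = n then (2*Real.pi : ℂ) else 0))
      = if n ∈ Finset.range (p.totalDegree + 1) then c n * (2*Real.pi : ℂ) else 0 := by
    rw [← Finset.sum_ite_eq' (Finset.range (p.totalDegree + 1)) n
      (fun m => c m * (2*Real.pi : ℂ))]
    apply Finset.sum_congr rfl
    intro m _
    by_cases h : m = n <;> simp [h]
  rw [hsum]
  have hπ : (2*Real.pi : ℝ) ≠ 0 := by positivity
  by_cases hn : n ∈ Finset.range (p.totalDegree + 1)
  · rw [if_pos hn, Complex.real_smul]
    have hπc : (Real.pi : ℂ) ≠ 0 := by exact_mod_cast Real.pi_ne_zero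
    push_cast
    field_simp
    rfl
  · rw [if_neg hn, smul_zero]
    have : homogeneousComponent n p = 0 := by
      apply homogeneousComponent_eq_zero
      have := Finset.mem_range.not.mp hn
      omega
    simp [this]

def avgLM (d n : ℕ) (z : CBall d) : C(CBall d, ℂ) →ₗ[ℂ] ℂ where
  toFun f := circAvg d n f z
  map_add' f g := by
    show circAvg d n (f + g) z = circAvg d n f z + circAvg d n g z
    unfold circAvg
    rw [← smul_add, ← intervalIntegral.integral_add
      ((integrand_continuous f n z).intervalIntegrable _ _)
      ((integrand_continuous g n z).intervalIntegrable _ _)]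
    congr 1
    apply intervalIntegral.integral_congr
    intro θ _
    simp [add_mul]
  map_smul' c f := by
    show circAvg d n (c • f) z = c * circAvg d n f z
    unfold circAvg
    have h1 : (∫ θ in (0:ℝ)..(2*Real.pi), (c • f) (rotPt d θ z)
          * Complex.exp (-(n:ℂ)*θ*Complex.I))
        = c * ∫ θ in (0:ℝ)..(2*Real.pi), f (rotPt d θ z)
          * Complex.exp (-(n:ℂ)*θ*Complex.I) := by
      rw [← intervalIntegral.integral_const_mul]
      apply intervalIntegral.integral_congr
      intro θ _
      simp [mul_assoc]
    rw [h1, mul_smul_comm]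

lemma avgLM_norm (d n : ℕ) (z : CBall d) (f : C(CBall d, ℂ)) :
    ‖avgLM d n z f‖ ≤ 1 * ‖f‖ := by
  rw [one_mul]; exact circAvg_norm_le n f z

def avgCLM (d n : ℕ) (z : CBall d) : C(CBall d, ℂ) →L[ℂ] ℂ :=
  LinearMap.mkContinuous (avgLM d n z) 1 (avgLM_norm d n z)

lemma avgCLM_apply (d n : ℕ) (z : CBall d) (f : C(CBall d, ℂ)) :
    avgCLM d n z f = circAvg d n f z := rfl

lemma avgCLM_norm_le (d n : ℕ) (z : CBall d) : ‖avgCLM d n z‖ ≤ 1 :=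
  LinearMap.mkContinuous_norm_le _ zero_le_one (avgLM_norm d n z)

lemma dilatePt_coord {d : ℕ} (t : ℂ) (ht : ‖t‖ ≤ 1) (z : CBall d) (i : Fin d) :
    ((dilatePt d t ht z : CBall d) : Cd d) i = t * (z : Cd d) i := rfl

lemma evalCLM_apply {d : ℕ} (z : CBall d) (f : C(CBall d, ℂ)) :
    ContinuousMap.evalCLM ℂ z f = f z := rfl

lemma summable_T {d : ℕ} (t : ℂ) (ht : ‖t‖ < 1) (z : CBall d) :
    Summable (fun n : ℕ => t ^ n • avgCLM d n z) := by
  apply Summable.of_norm_bounded (summable_geometric_of_lt_one (norm_nonneg t) ht)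
  intro n
  rw [norm_smul (t ^ n) (avgCLM d n z), norm_pow]
  calc ‖t‖ ^ n * ‖avgCLM d n z‖ ≤ ‖t‖ ^ n * 1 :=
        mul_le_mul_of_nonneg_left (avgCLM_norm_le d n z) (by positivity)
    _ = ‖t‖ ^ n := mul_one _

lemma dilate_eq_tsum {d : ℕ} (t : ℂ) (ht : ‖t‖ < 1) (f : C(CBall d, ℂ))
    (hf : f ∈ ballAlg d) (z : CBall d) :
    f (dilatePt d t ht.le z) = ∑' n : ℕ, t ^ n * circAvg d n f z := by
  set T : ℕ → (C(CBall d, ℂ) →L[ℂ] ℂ) := fun n => t ^ n • avgCLM d n z with hT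
  have hTsum : Summable T := summable_T t ht z
  set Ψ : C(CBall d, ℂ) →L[ℂ] ℂ := ∑' n, T n with hΨdef
  have hΨ : ∀ g : C(CBall d, ℂ), Ψ g = ∑' n : ℕ, t ^ n * circAvg d n g z := by
    intro g
    have h1 : (ContinuousLinearMap.apply ℂ ℂ g) (∑' n, T n)
        = ∑' n, (ContinuousLinearMap.apply ℂ ℂ g) (T n) :=
      (ContinuousLinearMap.apply ℂ ℂ g).map_tsum hTsum
    simpa [hT, ContinuousLinearMap.smul_apply, avgCLM_apply, smul_eq_mul] using h1
  have hS : ballAlg d ⊆ {g | ContinuousMap.evalCLM ℂ (dilatePt d t ht.le z) g = Ψ g} := by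
    apply closure_minimal _ (isClosed_eq (ContinuousMap.evalCLM ℂ _).continuous Ψ.continuous)
    rintro _ ⟨p, rfl⟩
    show ContinuousMap.evalCLM ℂ (dilatePt d t ht.le z) (polyMap d p) = Ψ (polyMap d p)
    rw [evalCLM_apply, hΨ, polyMap_apply]
    have hcoord : (fun i => ((dilatePt d t ht.le z : CBall d) : Cd d) i)
        = fun i => t * (z : Cd d) i := rfl
    rw [hcoord, eval_mul_homog]
    rw [tsum_eq_sum (s := Finset.range (p.totalDegree + 1))]
    · exact Finset.sum_congr rfl fun m _ => by rw [circAvg_poly]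
    · intro m hm
      rw [circAvg_poly]
      have : homogeneousComponent m p = 0 := by
        apply homogeneousComponent_eq_zero
        have := Finset.mem_range.not.mp hm
        omega
      simp [this]
  have := hS hf
  simpa [evalCLM_apply, hΨ f] using this

lemma smul_mem_J {d : ℕ} {J : Set C(CBall d, ℂ)} (hJ : IsIdealOfBallAlg d J)
    (c : ℂ) {f : C(CBall d, ℂ)} (hf : f ∈ J) : c • f ∈ J := by
  have h1 : (c • (1 : C(CBall d, ℂ))) ∈ ballAlg d := by
    apply subset_closure
    exact ⟨MvPolynomial.C c, by rw [show polyMap d (MvPolynomial.C c)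
      = algebraMap ℂ C(CBall d, ℂ) c from aeval_C _ c, Algebra.algebraMap_eq_smul_one]⟩
  have h2 := hJ.2.2.2 f hf _ h1
  rwa [smul_mul_assoc, one_mul] at h2

lemma forward_dir {d : ℕ} {J : Set C(CBall d, ℂ)}
    (hJ : IsIdealOfBallAlg d J) (hJcl : IsClosed J)
    (h : ∀ f ∈ J, ∀ n : ℕ, ∃ g ∈ J, ∀ z : CBall d, g z = circAvg d n f z) :
    IsHomogBallIdeal d J := by
  intro f hf t ht
  choose g hgJ hgz using h f hf
  have hnorm : ∀ n, ‖g n‖ ≤ ‖f‖ := by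
    intro n
    rw [ContinuousMap.norm_le _ (norm_nonneg f)]
    intro z
    rw [hgz n z]
    exact circAvg_norm_le n f z
  have hsummable : Summable (fun n : ℕ => t ^ n • g n) := by
    apply Summable.of_norm_bounded ((summable_geometric_of_lt_one (norm_nonneg t) ht).mul_right ‖f‖)
    intro n
    rw [norm_smul, norm_pow]
    exact mul_le_mul_of_nonneg_left (hnorm n) (by positivity)
  have hpartial : ∀ N : ℕ, ∑ n ∈ Finset.range N, t ^ n • g n ∈ J := by
    intro N
    induction N with
    | zero => simpa using hJ.2.1
    | succ N ih =>
      rw [Finset.sum_range_succ]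
      exact hJ.2.2.1 _ ih _ (smul_mem_J hJ _ (hgJ N))
  have hs : (∑' n : ℕ, t ^ n • g n) ∈ J :=
    hJcl.mem_of_tendsto hsummable.hasSum.tendsto_sum_nat (.of_forall hpartial)
  have heq : dilateFn d t ht.le f = ∑' n : ℕ, t ^ n • g n := by
    ext z
    have h1 : (∑' n : ℕ, t ^ n • g n) z = ∑' n : ℕ, t ^ n * g n z := by
      have h2 := (ContinuousMap.evalCLM ℂ z).map_tsum hsummable
      simpa [evalCLM_apply, smul_eq_mul] using h2
    rw [h1]
    show f (dilatePt d t ht.le z) = _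
    rw [dilate_eq_tsum t ht f (hJ.1 hf) z]
    exact tsum_congr fun n => by rw [hgz n z]
  rw [heq]
  exact hs

lemma smul_mem_ball {d : ℕ} (t : ℂ) (ht : ‖t‖ ≤ 1) (z : CBall d) :
    t • (z : Cd d) ∈ Metric.closedBall (0 : Cd d) 1 := by
  have hz : ‖(z : Cd d)‖ ≤ 1 := mem_closedBall_zero_iff.mp z.2
  rw [mem_closedBall_zero_iff, norm_smul]
  exact mul_le_one₀ ht (norm_nonneg _) hz

def K (d : ℕ) (f : C(CBall d, ℂ)) :
    C(↥(Metric.closedBall (0 : ℂ) 1), C(CBall d, ℂ)) :=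
  ContinuousMap.curry
    ⟨fun p => f ⟨(p.1 : ℂ) • (p.2 : Cd d),
        smul_mem_ball (p.1 : ℂ) (mem_closedBall_zero_iff.mp p.1.2) p.2⟩,
      f.continuous.comp (Continuous.subtype_mk
        ((continuous_subtype_val.comp continuous_fst).smul
          (continuous_subtype_val.comp continuous_snd)) _)⟩

lemma K_apply {d : ℕ} (f : C(CBall d, ℂ)) (t : ℂ) (ht : ‖t‖ ≤ 1)
    (htm : t ∈ Metric.closedBall (0 : ℂ) 1) :
    K d f ⟨t, htm⟩ = dilateFn d t ht f := rfl

lemma rot_mem {d : ℕ} {J : Set C(CBall d, ℂ)} (hJcl : IsClosed J)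
    (hom : IsHomogBallIdeal d J) {f : C(CBall d, ℂ)} (hf : f ∈ J) (θ : ℝ) :
    K d f ⟨Complex.exp ((θ : ℂ) * Complex.I),
      mem_closedBall_zero_iff.mpr (Complex.norm_exp_ofReal_mul_I θ).le⟩ ∈ J := by
  set c : ℂ := Complex.exp ((θ : ℂ) * Complex.I) with hc
  have hcnorm : ‖c‖ = 1 := Complex.norm_exp_ofReal_mul_I θ
  set r : ℕ → ℝ := fun k => 1 - 1 / ((k : ℝ) + 1) with hr
  have hr0 : ∀ k, 0 ≤ r k := by
    intro k
    have : 1 / ((k : ℝ) + 1) ≤ 1 := by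
      rw [div_le_one (by positivity)]
      simp
    simp only [hr]; linarith
  have hr1 : ∀ k, r k < 1 := by
    intro k
    have : 0 < 1 / ((k : ℝ) + 1) := by positivity
    simp only [hr]; linarith
  have hmem : ∀ k, ((r k : ℂ) * c) ∈ Metric.closedBall (0 : ℂ) 1 := by
    intro k
    rw [mem_closedBall_zero_iff, norm_mul, hcnorm, mul_one, Complex.norm_real,
      Real.norm_eq_abs, abs_of_nonneg (hr0 k)]
    exact (hr1 k).le
  have hKmem : ∀ k, K d f ⟨(r k : ℂ) * c, hmem k⟩ ∈ J := by
    intro k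
    have hlt : ‖(r k : ℂ) * c‖ < 1 := by
      rw [norm_mul, hcnorm, mul_one, Complex.norm_real, Real.norm_eq_abs,
        abs_of_nonneg (hr0 k)]
      exact hr1 k
    rw [K_apply f _ hlt.le (hmem k)]
    exact hom f hf _ hlt
  have htendsto : Filter.Tendsto (fun k => K d f ⟨(r k : ℂ) * c, hmem k⟩)
      Filter.atTop (nhds (K d f ⟨c, mem_closedBall_zero_iff.mpr hcnorm.le⟩)) := by
    apply (K d f).continuous.tendsto _ |>.comp
    rw [tendsto_subtype_rng]
    have h1 : Filter.Tendsto r Filter.atTop (nhds 1) := by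
      have := tendsto_one_div_add_atTop_nhds_zero_nat (𝕜 := ℝ)
      have h2 := Filter.Tendsto.const_sub (1 : ℝ) this
      simpa [hr] using h2
    have h2 : Filter.Tendsto (fun k => ((r k : ℝ) : ℂ)) Filter.atTop (nhds (1 : ℂ)) := by
      exact_mod_cast (Complex.continuous_ofReal.tendsto 1).comp h1
    simpa using h2.mul_const c
  exact hJcl.mem_of_tendsto htendsto (.of_forall hKmem)

lemma backward_dir {d : ℕ} {J : Set C(CBall d, ℂ)}
    (hJ : IsIdealOfBallAlg d J) (hJcl : IsClosed J) (hom : IsHomogBallIdeal d J) :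
    ∀ f ∈ J, ∀ n : ℕ, ∃ g ∈ J, ∀ z : CBall d, g z = circAvg d n f z := by
  intro f hf n
  set Jmod : Submodule ℂ C(CBall d, ℂ) :=
    { carrier := J
      add_mem' := fun ha hb => hJ.2.2.1 _ ha _ hb
      zero_mem' := hJ.2.1
      smul_mem' := fun c g hg => smul_mem_J hJ c hg } with hJmod
  haveI : CompleteSpace ↥Jmod := IsClosed.completeSpace_coe (hs := hJcl)
  set Gval : ℝ → C(CBall d, ℂ) := fun θ =>
    Complex.exp (-(n : ℂ) * θ * Complex.I) •
      K d f ⟨Complex.exp ((θ : ℂ) * Complex.I),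
        mem_closedBall_zero_iff.mpr (Complex.norm_exp_ofReal_mul_I θ).le⟩ with hGval
  have hGmem : ∀ θ, Gval θ ∈ J := fun θ =>
    smul_mem_J hJ _ (rot_mem hJcl hom hf θ)
  have hGcont : Continuous Gval := by
    apply Continuous.fun_smul
    · exact Complex.continuous_exp.comp (by continuity)
    · exact (K d f).continuous.comp (Continuous.subtype_mk
        (Complex.continuous_exp.comp (by continuity)) _)
  set G' : ℝ → ↥Jmod := fun θ => ⟨Gval θ, hGmem θ⟩ with hG'
  have hG'cont : Continuous G' := hGcont.subtype_mk _
  set g0 : C(CBall d, ℂ) := ∫ θ in (0:ℝ)..(2*Real.pi), Gval θ with hg0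
  have hg0J : g0 ∈ J := by
    have hcomm := Jmod.subtypeL.intervalIntegral_comp_comm
      (hG'cont.intervalIntegrable (μ := MeasureTheory.volume) (0:ℝ) (2*Real.pi))
    have : g0 = Jmod.subtypeL (∫ θ in (0:ℝ)..(2*Real.pi), G' θ) := by
      rw [← hcomm]; rfl
    rw [this]
    exact (∫ θ in (0:ℝ)..(2*Real.pi), G' θ).2
  refine ⟨(((2*Real.pi)⁻¹ : ℝ) : ℂ) • g0, smul_mem_J hJ _ hg0J, ?_⟩
  intro z
  have hg0z : g0 z = ∫ θ in (0:ℝ)..(2*Real.pi),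
      Complex.exp (-(n : ℂ) * θ * Complex.I) * f (rotPt d θ z) := by
    have hcomm := (ContinuousMap.evalCLM ℂ z).intervalIntegral_comp_comm
      (hGcont.intervalIntegrable (μ := MeasureTheory.volume) (0:ℝ) (2*Real.pi))
    rw [hg0]
    rw [show ((∫ θ in (0:ℝ)..(2*Real.pi), Gval θ) z)
        = (ContinuousMap.evalCLM ℂ z) (∫ θ in (0:ℝ)..(2*Real.pi), Gval θ) from rfl, ← hcomm]
    apply intervalIntegral.integral_congr
    intro θ _
    show (Gval θ) z = _
    rw [hGval]
    rfl
  show ((((2*Real.pi)⁻¹ : ℝ) : ℂ) • g0) z = circAvg d n f z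
  rw [ContinuousMap.smul_apply, hg0z, smul_eq_mul, circAvg, Complex.real_smul]
  congr 1
  apply intervalIntegral.integral_congr
  intro θ _
  ring

/-- A closed ideal `J` of the ball algebra contains all
homogeneous components `f_n` (circle averages) of each of its elements if and only
if it is invariant under the dilations `z ↦ t z` for all `t` in the open unit
disc. -/
theorem stmt17 (d : ℕ) (J : Set C(CBall d, ℂ))
    (hJ : IsIdealOfBallAlg d J) (hJcl : IsClosed J) :
    (∀ f ∈ J, ∀ n : ℕ, ∃ g ∈ J, ∀ z : CBall d, g z = circAvg d n f z) ↔
      IsHomogBallIdeal d J :=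
  ⟨fun h => forward_dir hJ hJcl h, fun hom => backward_dir hJ hJcl hom⟩
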